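/- For A = F_q[x] and a positive integer s, ζ(−s) := ∑_{d≥0} S_d(s) = 0 in F_q[x] if and only if s is a multiple of q − 1. -/

import Mathlib

open Polynomial

/-- `lq q k` is the sum of the base-`q` digits of `k`. -/
def lq (q k : ℕ) : ℕ := (Nat.digits q k).sum

/-- `Spow F d s = ∑_{a monic, deg a = d} a^s ∈ F[x]`, the power sum over all monic polynomials
of degree `d`, realized as the sum over all coefficient tuples `c : Fin d → F`. -/
noncomputable def Spow (F : Type*) [Field F] [Fintype F] (d s : ℕ) : F[X] :=
  ∑ c : Fin d → F, (X ^ d + ∑ i : Fin d, C (c i) * X ^ (i : ℕ)) ^ s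

section Aux

open Finset

variable {F : Type*} [Field F] [Fintype F]

private lemma sum_pow_eq_zero' {n : ℕ} (h : ¬ (Fintype.card F - 1) ∣ n) :
    ∑ a : F, a ^ n = 0 := by
  have hq1 : 1 < Fintype.card F := Fintype.one_lt_card
  have hQ0 : 0 < Fintype.card F - 1 := by omega
  have hn0 : n ≠ 0 := by rintro rfl; exact h (dvd_zero _)
  have hmod0 : n % (Fintype.card F - 1) ≠ 0 := fun hm => h (Nat.dvd_of_mod_eq_zero hm)
  have key : ∀ a : F, a ^ n = a ^ (n % (Fintype.card F - 1)) := by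
    intro a
    by_cases ha : a = 0
    · simp [ha, zero_pow, hn0, hmod0]
    · conv_lhs => rw [← Nat.div_add_mod n (Fintype.card F - 1)]
      rw [pow_add, pow_mul, FiniteField.pow_card_sub_one_eq_one a ha, one_pow, one_mul]
  simp_rw [key]
  exact FiniteField.sum_pow_lt_card_sub_one F _ (Nat.mod_lt _ hQ0)

private lemma sum_pow_aux' {k : ℕ} (h : k = 0 ∨ ¬ (Fintype.card F - 1) ∣ k) :
    ∑ a : F, a ^ k = 0 := by
  rcases h with rfl | h
  · simp [FiniteField.cast_card_eq_zero]
  · exact sum_pow_eq_zero' h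

private lemma Ulem : ∀ (D : ℕ) (s : ℕ) (v : Fin D → F[X]), s < D * (Fintype.card F - 1) →
    (∑ c : Fin D → F, (∑ i : Fin D, C (c i) * v i) ^ s) = 0 := by
  intro D
  induction D with
  | zero => intro s v h; simp at h
  | succ D ih =>
    intro s v hsD
    classical
    rw [← (Fin.consEquiv (fun _ : Fin (D+1) => F)).sum_comp
      (fun c => (∑ i : Fin (D+1), C (c i) * v i) ^ s)]
    have hsplit : ∀ (a : F) (b : Fin D → F),
        (∑ i : Fin (D+1), C ((Fin.cons a b : Fin (D+1) → F) i) * v i)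
          = C a * v 0 + ∑ i : Fin D, C (b i) * v i.succ := by
      intro a b
      rw [Fin.sum_univ_succ]
      simp
    simp only [Fin.consEquiv_apply]
    simp_rw [hsplit, add_pow]
    rw [Finset.sum_comm]
    apply Finset.sum_eq_zero
    intro k hk
    rw [Fintype.sum_prod_type]
    have hks : k ≤ s := Nat.lt_succ_iff.mp (Finset.mem_range.mp hk)
    have hterm : ∀ (a : F) (b : Fin D → F),
        (C a * v 0) ^ k * (∑ i : Fin D, C (b i) * v i.succ) ^ (s - k) * (s.choose k : F[X])
        = C (a ^ k) * ((∑ i : Fin D, C (b i) * v i.succ) ^ (s - k)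
            * (v 0 ^ k * (s.choose k : F[X]))) := by
      intro a b
      rw [mul_pow, ← C_pow]
      ring
    simp_rw [hterm]
    by_cases hk0 : k = 0 ∨ ¬ (Fintype.card F - 1) ∣ k
    · rw [Finset.sum_comm]
      apply Finset.sum_eq_zero
      intro b _
      rw [← Finset.sum_mul, ← map_sum, sum_pow_aux' hk0, map_zero, zero_mul]
    · push_neg at hk0
      obtain ⟨hkne, hkdvd⟩ := hk0
      have hkQ : Fintype.card F - 1 ≤ k := Nat.le_of_dvd (Nat.pos_of_ne_zero hkne) hkdvd
      have hlt : s - k < D * (Fintype.card F - 1) := by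
        have h1 : Fintype.card F - 1 ≤ s := hkQ.trans hks
        calc s - k ≤ s - (Fintype.card F - 1) := Nat.sub_le_sub_left hkQ s
          _ < D * (Fintype.card F - 1) := by
            rw [Nat.sub_lt_iff_lt_add h1]
            calc s < (D + 1) * (Fintype.card F - 1) := hsD
              _ = D * (Fintype.card F - 1) + (Fintype.card F - 1) := by ring
      apply Finset.sum_eq_zero
      intro a _
      rw [← Finset.mul_sum, ← Finset.sum_mul, ih (s - k) (fun i => v i.succ) hlt,
        zero_mul, mul_zero]

private lemma Spow_eq_zero' {d s : ℕ} (h : s < d * (Fintype.card F - 1)) : Spow F d s = 0 := by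
  classical
  simp only [Spow]
  simp_rw [add_pow]
  rw [Finset.sum_comm]
  apply Finset.sum_eq_zero
  intro k hk
  have hterm : ∀ c : Fin d → F,
      ((X : F[X]) ^ d) ^ k * (∑ i : Fin d, C (c i) * X ^ (i : ℕ)) ^ (s - k) * (s.choose k : F[X])
        = (∑ i : Fin d, C (c i) * X ^ (i : ℕ)) ^ (s - k)
            * ((X ^ d) ^ k * (s.choose k : F[X])) := by
    intro c; ring
  simp_rw [hterm]
  rw [← Finset.sum_mul]
  have h0 : (∑ c : Fin d → F, (∑ i : Fin d, C (c i) * X ^ (i : ℕ)) ^ (s - k)) = 0 :=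
    Ulem d (s - k) (fun i => X ^ (i : ℕ)) (lt_of_le_of_lt (Nat.sub_le s k) h)
  rw [h0, zero_mul]

private lemma Tstep {D s : ℕ} (hdvd : (Fintype.card F - 1) ∣ s) :
    (∑ c : Fin (D+1) → F, (∑ i : Fin (D+1), C (c i) * X ^ (i : ℕ)) ^ s)
      = (∑ c : Fin D → F, (∑ i : Fin D, C (c i) * X ^ (i : ℕ)) ^ s) - Spow F D s := by
  classical
  rw [← (Fin.snocEquiv (fun _ : Fin (D+1) => F)).sum_comp
    (fun c => (∑ i : Fin (D+1), C (c i) * X ^ (i : ℕ)) ^ s)]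
  have hsnoc : ∀ (a : F) (b : Fin D → F),
      (∑ i : Fin (D+1), C ((Fin.snocEquiv (fun _ : Fin (D+1) => F) (a, b)) i) * X ^ (i : ℕ))
        = (∑ i : Fin D, C (b i) * X ^ (i : ℕ)) + C a * X ^ D := by
    intro a b
    rw [Fin.sum_univ_castSucc]
    simp [Fin.snocEquiv]
  simp only [Fintype.sum_prod_type]
  simp_rw [hsnoc]
  rw [Finset.sum_eq_sum_sdiff_singleton_add (Finset.mem_univ (0 : F))]
  have h0 : (∑ b : Fin D → F, ((∑ i : Fin D, C (b i) * X ^ (i : ℕ)) + C (0:F) * X ^ D) ^ s)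
      = ∑ c : Fin D → F, (∑ i : Fin D, C (c i) * X ^ (i : ℕ)) ^ s := by
    simp
  have hα : ∀ a ∈ Finset.univ \ {(0:F)},
      (∑ b : Fin D → F, ((∑ i : Fin D, C (b i) * X ^ (i : ℕ)) + C a * X ^ D) ^ s)
        = Spow F D s := by
    intro a ha
    have ha0 : a ≠ 0 := by simpa using (Finset.mem_sdiff.mp ha).2
    have has : a ^ s = 1 := by
      obtain ⟨t, rfl⟩ := hdvd
      rw [pow_mul, FiniteField.pow_card_sub_one_eq_one a ha0, one_pow]
    simp only [Spow]
    refine (Fintype.sum_equiv (Equiv.piCongrRight fun _ : Fin D => Equiv.mulLeft₀ a ha0)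
      _ _ ?_).symm
    intro b
    simp only [Equiv.piCongrRight_apply, Pi.map_apply, Equiv.mulLeft₀_apply]
    have hfac : ((∑ i : Fin D, C (a * b i) * X ^ (i : ℕ)) + C a * X ^ D)
        = C a * (X ^ D + ∑ i : Fin D, C (b i) * X ^ (i : ℕ)) := by
      simp only [map_mul]
      rw [mul_add, Finset.mul_sum, add_comm]
      congr 1
      exact Finset.sum_congr rfl fun i _ => mul_assoc _ _ _
    rw [hfac, mul_pow, ← map_pow, has, map_one, one_mul]
  rw [Finset.sum_congr rfl hα, h0, Finset.sum_const, Finset.card_sdiff_of_subset (by simp),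
    Finset.card_singleton, Finset.card_univ]
  have hsmul : (Fintype.card F - 1) • Spow F D s = - Spow F D s := by
    have h1 : 1 ≤ Fintype.card F := Fintype.card_pos
    have hcast : ((Fintype.card F - 1 : ℕ) : F[X]) = -1 := by
      rw [Nat.cast_sub h1, Nat.cast_one]
      have : ((Fintype.card F : ℕ) : F[X]) = C ((Fintype.card F : ℕ) : F) :=
        (map_natCast (C : F →+* F[X]) _).symm
      rw [this, FiniteField.cast_card_eq_zero, map_zero, zero_sub]
    rw [nsmul_eq_mul, hcast, neg_one_mul]
  rw [hsmul]
  abel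

private lemma sum_Spow_eq_zero' {s : ℕ} (hs : 1 ≤ s) (hdvd : (Fintype.card F - 1) ∣ s) :
    ∑ d ∈ Finset.range (s+1), Spow F d s = 0 := by
  have key : ∀ D : ℕ, (∑ c : Fin D → F, (∑ i : Fin D, C (c i) * X ^ (i : ℕ)) ^ s)
      + ∑ d ∈ Finset.range D, Spow F d s = 0 := by
    intro D
    induction D with
    | zero =>
      simp [zero_pow (by omega : s ≠ 0)]
    | succ D ihD =>
      rw [Tstep hdvd, Finset.sum_range_succ]
      linear_combination ihD
  have hT : (∑ c : Fin (s+1) → F, (∑ i : Fin (s+1), C (c i) * X ^ (i : ℕ)) ^ s) = 0 := by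
    apply Ulem
    have hq1 : 1 < Fintype.card F := Fintype.one_lt_card
    calc s < s + 1 := Nat.lt_succ_self s
      _ ≤ (s + 1) * (Fintype.card F - 1) := Nat.le_mul_of_pos_right _ (by omega)
  have := key (s+1)
  rw [hT, zero_add] at this
  exact this

private lemma Spow_deg_zero (s : ℕ) : Spow F 0 s = 1 := by
  simp [Spow]

private lemma eval0_Spow_succ (e : ℕ) {s : ℕ} (hnd : ¬ (Fintype.card F - 1) ∣ s) :
    eval 0 (Spow F (e+1) s) = 0 := by
  classical
  have hs0 : s ≠ 0 := by rintro rfl; exact hnd (dvd_zero _)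
  simp only [Spow, eval_finset_sum]
  have hc : ∀ c : Fin (e+1) → F,
      eval 0 ((X ^ (e+1) + ∑ i : Fin (e+1), C (c i) * X ^ (i : ℕ)) ^ s) = (c 0) ^ s := by
    intro c
    rw [eval_pow]
    congr 1
    rw [eval_add, eval_pow, eval_X, zero_pow (Nat.succ_ne_zero e), eval_finset_sum,
      Fin.sum_univ_succ]
    simp
  rw [Finset.sum_congr rfl fun c _ => hc c]
  rw [← (Fin.consEquiv (fun _ : Fin (e+1) => F)).sum_comp
    (fun c : Fin (e+1) → F => (c 0) ^ s), Fintype.sum_prod_type]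
  simp only [Fin.consEquiv_apply, Fin.cons_zero]
  rw [Finset.sum_comm]
  apply Finset.sum_eq_zero
  intro b _
  exact sum_pow_eq_zero' hnd

end Aux

/-- For `A = F_q[x]` and a positive integer `s`,
`ζ(−s) = ∑_{d ≥ 0} S_d(s) = 0` in `F_q[x]` if and only if `s` is a multiple of `q − 1`. -/
theorem statement3 (F : Type*) [Field F] [Fintype F] (q : ℕ) (hq : q = Fintype.card F)
    (s : ℕ) (hs : 1 ≤ s) :
    (∑ᶠ d : ℕ, Spow F d s = 0) ↔ (q - 1) ∣ s := by
  subst hq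
  have hq1 : 1 < Fintype.card F := Fintype.one_lt_card
  have hfin : (∑ᶠ d : ℕ, Spow F d s) = ∑ d ∈ Finset.range (s+1), Spow F d s := by
    apply finsum_eq_sum_of_support_subset
    intro d hd
    simp only [Finset.coe_range, Set.mem_Iio]
    by_contra hds
    push_neg at hds
    apply hd
    apply Spow_eq_zero'
    calc s < s + 1 := Nat.lt_succ_self s
      _ ≤ d := hds
      _ = d * 1 := (mul_one d).symm
      _ ≤ d * (Fintype.card F - 1) := Nat.mul_le_mul_left d (by omega)
  rw [hfin]
  constructor
  · intro h0
    by_contra hnd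
    have hev := congrArg (eval 0) h0
    rw [eval_finset_sum, eval_zero, Finset.sum_range_succ'] at hev
    have h1 : ∀ i ∈ Finset.range s, eval 0 (Spow F (i+1) s) = 0 :=
      fun i _ => eval0_Spow_succ i hnd
    rw [Finset.sum_congr rfl h1, Finset.sum_const_zero, Spow_deg_zero, eval_one, zero_add] at hev
    exact one_ne_zero hev
  · intro hdvd
    exact sum_Spow_eq_zero' hs hdvd
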